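/- For every even natural number r ≥ 2, the square of the double factorial satisfies r!·√(r+1) ≤ (r!!)² ≤ r!·√(2r). -/
import Mathlib


open Nat

lemma df_key (k : ℕ) :
    (2*k+3) * ((2*k+1)‼)^2 ≤ ((2*k+2)‼)^2 ∧
      ((2*k+2)‼)^2 ≤ (2*(2*k+2)) * ((2*k+1)‼)^2 := by
  induction k with
  | zero => simp [Nat.doubleFactorial]
  | succ n ih =>
    obtain ⟨h1, h2⟩ := ih
    have e1 : (2*(n+1)+2)‼ = (2*n+4) * (2*n+2)‼ := by
      have : 2*(n+1)+2 = (2*n+2)+2 := by ring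
      rw [this, Nat.doubleFactorial_add_two]
    have e2 : (2*(n+1)+1)‼ = (2*n+3) * (2*n+1)‼ := by
      have : 2*(n+1)+1 = (2*n+1)+2 := by ring
      rw [this, Nat.doubleFactorial_add_two]
    constructor
    · rw [e1, e2]
      calc (2*(n+1)+3) * ((2*n+3) * (2*n+1)‼)^2
          = ((2*(n+1)+3) * (2*n+3)^2) * ((2*n+1)‼)^2 := by ring
        _ ≤ ((2*n+4)^2 * (2*n+3)) * ((2*n+1)‼)^2 :=
            Nat.mul_le_mul_right _ (by nlinarith)
        _ = (2*n+4)^2 * ((2*n+3) * ((2*n+1)‼)^2) := by ring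
        _ ≤ (2*n+4)^2 * ((2*n+2)‼)^2 := Nat.mul_le_mul_left _ h1
        _ = ((2*n+4) * (2*n+2)‼)^2 := by ring
    · rw [e1, e2]
      calc ((2*n+4) * (2*n+2)‼)^2
          = (2*n+4)^2 * ((2*n+2)‼)^2 := by ring
        _ ≤ (2*n+4)^2 * (2*(2*n+2) * ((2*n+1)‼)^2) := Nat.mul_le_mul_left _ h2
        _ = ((2*n+4)^2 * (2*(2*n+2))) * ((2*n+1)‼)^2 := by ring
        _ ≤ ((2*(2*(n+1)+2)) * (2*n+3)^2) * ((2*n+1)‼)^2 :=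
            Nat.mul_le_mul_right _ (by nlinarith)
        _ = (2*(2*(n+1)+2)) * ((2*n+3) * (2*n+1)‼)^2 := by ring

theorem doubleFactorial_sq_even (r : ℕ) (hr : 2 ≤ r) (hre : Even r) :
    (r ! : ℝ) * Real.sqrt (r + 1) ≤ ((r‼ : ℝ)) ^ 2 ∧
      ((r‼ : ℝ)) ^ 2 ≤ (r ! : ℝ) * Real.sqrt (2 * r) := by
  obtain ⟨m, hm⟩ := hre
  have hm1 : 1 ≤ m := by omega
  obtain ⟨k, hk⟩ : ∃ k, r = 2*k+2 := ⟨m-1, by omega⟩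
  subst hk
  obtain ⟨h1, h2⟩ := df_key k
  -- real versions
  have h1' : ((2*k+3 : ℕ) : ℝ) * (((2*k+1)‼ : ℕ) : ℝ)^2 ≤ (((2*k+2)‼ : ℕ) : ℝ)^2 := by
    exact_mod_cast h1
  have h2' : (((2*k+2)‼ : ℕ) : ℝ)^2 ≤ ((2*(2*k+2) : ℕ) : ℝ) * (((2*k+1)‼ : ℕ) : ℝ)^2 := by
    exact_mod_cast h2
  have hfac : ((2*k+2)! : ℝ) = ((2*k+2)‼ : ℕ) * ((2*k+1)‼ : ℕ) := by
    exact_mod_cast congrArg (Nat.cast (R := ℝ)) (Nat.factorial_eq_mul_doubleFactorial (2*k+1))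
  have hdnn : (0:ℝ) ≤ (((2*k+1)‼ : ℕ) : ℝ) := Nat.cast_nonneg _
  have hDnn : (0:ℝ) ≤ (((2*k+2)‼ : ℕ) : ℝ) := Nat.cast_nonneg _
  constructor
  · -- lower bound
    have hs : Real.sqrt ((2*k+2 : ℕ) + 1) * (((2*k+1)‼ : ℕ) : ℝ) ≤ (((2*k+2)‼ : ℕ) : ℝ) := by
      have : Real.sqrt (((2*k+3 : ℕ) : ℝ) * (((2*k+1)‼ : ℕ) : ℝ)^2)
          ≤ Real.sqrt ((((2*k+2)‼ : ℕ) : ℝ)^2) := Real.sqrt_le_sqrt h1'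
      rw [Real.sqrt_mul (by positivity), Real.sqrt_sq hdnn, Real.sqrt_sq hDnn] at this
      calc Real.sqrt ((2*k+2 : ℕ) + 1) * (((2*k+1)‼ : ℕ) : ℝ)
          = Real.sqrt ((2*k+3 : ℕ)) * (((2*k+1)‼ : ℕ) : ℝ) := by
            rw [show (((2*k+2 : ℕ)) : ℝ) + 1 = ((2*k+3 : ℕ) : ℝ) by push_cast; ring]
        _ ≤ _ := this
    calc ((2*k+2)! : ℝ) * Real.sqrt ((2*k+2 : ℕ) + 1)
        = (((2*k+2)‼ : ℕ) : ℝ) * (Real.sqrt ((2*k+2 : ℕ) + 1) * (((2*k+1)‼ : ℕ) : ℝ)) := by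
          rw [hfac]; ring
      _ ≤ (((2*k+2)‼ : ℕ) : ℝ) * (((2*k+2)‼ : ℕ) : ℝ) := by
          exact mul_le_mul_of_nonneg_left hs hDnn
      _ = (((2*k+2)‼ : ℕ) : ℝ)^2 := (sq _).symm
  · -- upper bound
    have hs : (((2*k+2)‼ : ℕ) : ℝ) ≤ Real.sqrt (2 * ((2*k+2 : ℕ) : ℝ)) * (((2*k+1)‼ : ℕ) : ℝ) := by
      have : Real.sqrt ((((2*k+2)‼ : ℕ) : ℝ)^2)
          ≤ Real.sqrt (((2*(2*k+2) : ℕ) : ℝ) * (((2*k+1)‼ : ℕ) : ℝ)^2) := Real.sqrt_le_sqrt h2'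
      rw [Real.sqrt_mul (by positivity), Real.sqrt_sq hdnn, Real.sqrt_sq hDnn] at this
      calc (((2*k+2)‼ : ℕ) : ℝ)
          ≤ Real.sqrt (((2*(2*k+2) : ℕ) : ℝ)) * (((2*k+1)‼ : ℕ) : ℝ) := this
        _ = Real.sqrt (2 * ((2*k+2 : ℕ) : ℝ)) * (((2*k+1)‼ : ℕ) : ℝ) := by
            rw [show ((2*(2*k+2) : ℕ) : ℝ) = 2 * ((2*k+2 : ℕ) : ℝ) by push_cast; ring]
    calc (((2*k+2)‼ : ℕ) : ℝ)^2
        = (((2*k+2)‼ : ℕ) : ℝ) * (((2*k+2)‼ : ℕ) : ℝ) := sq _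
      _ ≤ (((2*k+2)‼ : ℕ) : ℝ) * (Real.sqrt (2 * ((2*k+2 : ℕ) : ℝ)) * (((2*k+1)‼ : ℕ) : ℝ)) :=
          mul_le_mul_of_nonneg_left hs hDnn
      _ = ((2*k+2)! : ℝ) * Real.sqrt (2 * ((2*k+2 : ℕ) : ℝ)) := by rw [hfac]; ring
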